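/- arXiv:1701.00275 — 4 statements merged into one kernel-verified Lean document; each statement's English description precedes it below -/
import Mathlib

section
/- Let G be a torsion-free nilpotent group of nilpotency class exactly c, and let H be a subgroup of G of finite index. Then H is also nilpotent of nilpotency class exactly c. -/
open Subgroup

/-- `Monoid.IsTorsionFree` as in the older Mathlib (removed since). -/
def Monoid.IsTorsionFree (G : Type*) [Monoid G] : Prop :=
  ∀ g : G, g ≠ 1 → ¬IsOfFinOrder g

lemma tf_pow {G : Type*} [Group G] (htf : Monoid.IsTorsionFree G) {x : G} {n : ℕ}
    (hn : n ≠ 0) (h : x ^ n = 1) : x = 1 := by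
  by_contra hx
  exact htf x hx (isOfFinOrder_iff_pow_eq_one.mpr ⟨n, Nat.pos_of_ne_zero hn, h⟩)

lemma oneStep {G : Type*} [Group G] (htf : Monoid.IsTorsionFree G) :
    ∀ (j : ℕ) (x : G) (n : ℕ), n ≠ 0 → x ∈ Subgroup.upperCentralSeries G (j + 1) →
      x ^ n ∈ Subgroup.upperCentralSeries G j → x ∈ Subgroup.upperCentralSeries G j := by
  intro j
  induction j with
  | zero =>
    intro x n hn _ hxn
    rw [Subgroup.upperCentralSeries_zero, Subgroup.mem_bot] at *
    exact tf_pow htf hn hxn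
  | succ j ih =>
    intro x n hn hx hxn
    rw [Subgroup.mem_upperCentralSeries_succ_iff]
    intro a
    set c := x * a * x⁻¹ * a⁻¹ with hcdef
    have hc1 : c ∈ Subgroup.upperCentralSeries G (j + 1) :=
      (Subgroup.mem_upperCentralSeries_succ_iff).mp hx a
    have key : ∀ k : ℕ, (x ^ k * a * (x ^ k)⁻¹ * a⁻¹) * (c ^ k)⁻¹ ∈ Subgroup.upperCentralSeries G j := by
      intro k
      induction k with
      | zero => simpa using (Subgroup.upperCentralSeries G j).one_mem
      | succ k ihk =>
        have h1 : x ^ k * c * (x ^ k)⁻¹ * c⁻¹ ∈ Subgroup.upperCentralSeries G j := by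
          have := (Subgroup.mem_upperCentralSeries_succ_iff).mp hc1 (x ^ k)
          have := (Subgroup.upperCentralSeries G j).inv_mem this
          simpa [mul_assoc, commutatorElement_def] using this
        have h2 : c * ((x ^ k * a * (x ^ k)⁻¹ * a⁻¹) * (c ^ k)⁻¹) * c⁻¹ ∈ Subgroup.upperCentralSeries G j :=
          (inferInstance : (Subgroup.upperCentralSeries G j).Normal).conj_mem _ ihk c
        have stepB : x ^ k * c * (x ^ k)⁻¹ * (x ^ k * a * (x ^ k)⁻¹ * a⁻¹) =
            x ^ (k+1) * a * (x ^ (k+1))⁻¹ * a⁻¹ := by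
          rw [hcdef]; group
        have hid : (x ^ (k+1) * a * (x ^ (k+1))⁻¹ * a⁻¹) * (c ^ (k+1))⁻¹ =
            (x ^ k * c * (x ^ k)⁻¹ * c⁻¹) *
            (c * ((x ^ k * a * (x ^ k)⁻¹ * a⁻¹) * (c ^ k)⁻¹) * c⁻¹) := by
          rw [← stepB]; group
        rw [hid]
        exact (Subgroup.upperCentralSeries G j).mul_mem h1 h2
    have hun : (x ^ n * a * (x ^ n)⁻¹ * a⁻¹) ∈ Subgroup.upperCentralSeries G j :=
      (Subgroup.mem_upperCentralSeries_succ_iff).mp hxn a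
    have hcn : c ^ n ∈ Subgroup.upperCentralSeries G j := by
      have := (Subgroup.upperCentralSeries G j).mul_mem ((Subgroup.upperCentralSeries G j).inv_mem (key n)) hun
      simpa [mul_assoc] using this
    exact ih c n hn hc1 hcn

lemma isolated {G : Type*} [Group G] [hGN : Group.IsNilpotent G]
    (htf : Monoid.IsTorsionFree G) (i : ℕ) {x : G} {n : ℕ} (hn : n ≠ 0)
    (h : x ^ n ∈ Subgroup.upperCentralSeries G i) : x ∈ Subgroup.upperCentralSeries G i := by
  obtain ⟨N, hN⟩ := hGN.nilpotent
  have aux : ∀ m : ℕ, x ∈ Subgroup.upperCentralSeries G (i + m) → x ∈ Subgroup.upperCentralSeries G i := by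
    intro m
    induction m with
    | zero => exact fun hx => hx
    | succ m ihm =>
      intro hx
      exact ihm (oneStep htf (i + m) x n hn hx
        (Subgroup.upperCentralSeries_mono G (Nat.le_add_right i m) h))
  exact aux N (Subgroup.upperCentralSeries_mono G (Nat.le_add_left N i) (hN ▸ Subgroup.mem_top x))

lemma quot_tf {G : Type*} [Group G] [Group.IsNilpotent G]
    (htf : Monoid.IsTorsionFree G) (i : ℕ) :
    Monoid.IsTorsionFree (G ⧸ Subgroup.upperCentralSeries G i) := by
  intro g hg hfin
  obtain ⟨n, hn, hpow⟩ := isOfFinOrder_iff_pow_eq_one.mp hfin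
  obtain ⟨x, rfl⟩ := QuotientGroup.mk_surjective g
  have : ((x ^ n : G) : G ⧸ Subgroup.upperCentralSeries G i) = 1 := by
    rw [QuotientGroup.mk_pow]; exact hpow
  have hx : x ^ n ∈ Subgroup.upperCentralSeries G i := (QuotientGroup.eq_one_iff _).mp this
  exact hg ((QuotientGroup.eq_one_iff _).mpr (isolated htf i hn.ne' hx))

lemma center_isolated {G : Type*} [Group G] [Group.IsNilpotent G]
    (htf : Monoid.IsTorsionFree G) {x : G} {n : ℕ} (hn : n ≠ 0)
    (h : x ^ n ∈ Subgroup.center G) : x ∈ Subgroup.center G := by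
  rw [← Subgroup.upperCentralSeries_one] at h ⊢
  exact isolated htf 1 hn h

lemma quot_center_tf {G : Type*} [Group G] [Group.IsNilpotent G]
    (htf : Monoid.IsTorsionFree G) :
    Monoid.IsTorsionFree (G ⧸ Subgroup.center G) := by
  intro g hg hfin
  obtain ⟨n, hn, hpow⟩ := isOfFinOrder_iff_pow_eq_one.mp hfin
  obtain ⟨x, rfl⟩ := QuotientGroup.mk_surjective g
  have : ((x ^ n : G) : G ⧸ Subgroup.center G) = 1 := by
    rw [QuotientGroup.mk_pow]; exact hpow
  have hx : x ^ n ∈ Subgroup.center G := (QuotientGroup.eq_one_iff _).mp this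
  exact hg ((QuotientGroup.eq_one_iff _).mpr (center_isolated htf hn.ne' hx))

universe u in
lemma comm_of_pow_comm : ∀ (N : ℕ) (G : Type u) [Group G] [Group.IsNilpotent G],
    Monoid.IsTorsionFree G → Group.nilpotencyClass G ≤ N → ∀ x y : G, ∀ n : ℕ, n ≠ 0 →
    x * y ^ n * x⁻¹ * (y ^ n)⁻¹ = 1 → x * y * x⁻¹ * y⁻¹ = 1 := by
  intro N
  induction N with
  | zero =>
    intro G _ _ _ hcls x y n _ _
    haveI : Subsingleton G :=
      nilpotencyClass_zero_iff_subsingleton.mp (Nat.le_zero.mp hcls)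
    exact Subsingleton.elim _ _
  | succ N ih =>
    intro G _ _ htf hcls x y n hn h
    have hQtf := quot_center_tf htf
    have hQcls : Group.nilpotencyClass (G ⧸ Subgroup.center G) ≤ N := by
      rw [nilpotencyClass_quotient_center]; omega
    have hq : (x : G ⧸ Subgroup.center G) * (y : G ⧸ Subgroup.center G) ^ n *
        (x : G ⧸ Subgroup.center G)⁻¹ * ((y : G ⧸ Subgroup.center G) ^ n)⁻¹ = 1 := by
      have := congrArg (QuotientGroup.mk (s := Subgroup.center G)) h
      simpa using this
    have hz : x * y * x⁻¹ * y⁻¹ ∈ Subgroup.center G := by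
      have := ih (G ⧸ Subgroup.center G) hQtf hQcls x y n hn hq
      rw [← QuotientGroup.eq_one_iff (x * y * x⁻¹ * y⁻¹)]
      simpa using this
    set z := x * y * x⁻¹ * y⁻¹ with hzdef
    have key : ∀ k : ℕ, x * y ^ k * x⁻¹ * (y ^ k)⁻¹ = z ^ k := by
      intro k
      induction k with
      | zero => simp
      | succ k ihk =>
        have hid : x * y ^ (k+1) * x⁻¹ * (y ^ (k+1))⁻¹ =
            z * (y * (x * y ^ k * x⁻¹ * (y ^ k)⁻¹) * y⁻¹) := by
          rw [hzdef]; group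
        rw [hid, ihk]
        have hcom : y * z ^ k * y⁻¹ = z ^ k := by
          have := (Subgroup.mem_center_iff.mp (pow_mem hz k) y).symm
          rw [← this]; group
        rw [hcom, ← pow_succ']
    have : z ^ n = 1 := by rw [← key n]; exact h
    exact tf_pow htf hn this

lemma ucs_incl {G : Type*} [Group G] [Group.IsNilpotent G]
    (htf : Monoid.IsTorsionFree G) (H : Subgroup G) (hH : H.index ≠ 0) :
    ∀ (i : ℕ) (h : H), h ∈ Subgroup.upperCentralSeries H i → (h : G) ∈ Subgroup.upperCentralSeries G i := by
  intro i
  induction i with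
  | zero =>
    intro h hh
    rw [Subgroup.upperCentralSeries_zero, Subgroup.mem_bot] at hh ⊢
    rw [hh]; rfl
  | succ i ih =>
    intro h hh
    rw [Subgroup.mem_upperCentralSeries_succ_iff]
    intro a
    obtain ⟨n, hn, _, hna⟩ := Subgroup.exists_pow_mem_of_index_ne_zero hH a
    have hin : (h : G) * a ^ n * (h : G)⁻¹ * (a ^ n)⁻¹ ∈ Subgroup.upperCentralSeries G i := by
      have h1 := Subgroup.mem_upperCentralSeries_succ_iff.mp hh ⟨a ^ n, hna⟩
      have h2 := ih _ h1
      simpa [commutatorElement_def] using h2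
    set Q := G ⧸ Subgroup.upperCentralSeries G i
    have hQtf : Monoid.IsTorsionFree Q := quot_tf htf i
    have hq : ((h : G) : Q) * ((a : G) : Q) ^ n * ((h : G) : Q)⁻¹ * (((a : G) : Q) ^ n)⁻¹ = 1 := by
      rw [← QuotientGroup.mk_pow, ← QuotientGroup.mk_inv, ← QuotientGroup.mk_inv,
        ← QuotientGroup.mk_mul, ← QuotientGroup.mk_mul, ← QuotientGroup.mk_mul,
        QuotientGroup.eq_one_iff]
      exact hin
    have := comm_of_pow_comm (Group.nilpotencyClass Q) Q hQtf le_rfl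
      ((h : G) : Q) ((a : G) : Q) n hn.ne' hq
    rw [← QuotientGroup.mk_inv, ← QuotientGroup.mk_inv, ← QuotientGroup.mk_mul,
      ← QuotientGroup.mk_mul, ← QuotientGroup.mk_mul, QuotientGroup.eq_one_iff] at this
    exact this

theorem statement13 (G : Type*) [Group G] (htf : Monoid.IsTorsionFree G)
    [hG : Group.IsNilpotent G] (c : ℕ) (hc : Group.nilpotencyClass G = c)
    (H : Subgroup G) (hH : H.index ≠ 0) :
    ∃ hHN : Group.IsNilpotent H, Group.nilpotencyClass H = c := by
  refine ⟨inferInstance, ?_⟩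
  set d := Group.nilpotencyClass H with hd
  have hle : d ≤ c := hc ▸ Subgroup.nilpotencyClass_le H
  have htop : Subgroup.upperCentralSeries G d = ⊤ := by
    rw [eq_top_iff]
    intro g _
    obtain ⟨n, hn, _, hgn⟩ := Subgroup.exists_pow_mem_of_index_ne_zero hH g
    have h1 : (⟨g ^ n, hgn⟩ : H) ∈ Subgroup.upperCentralSeries H d := by
      rw [hd, Subgroup.upperCentralSeries_nilpotencyClass]; trivial
    have h2 : g ^ n ∈ Subgroup.upperCentralSeries G d := ucs_incl htf H hH d _ h1
    exact isolated htf d hn.ne' h2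
  have hge : c ≤ d := hc ▸ Subgroup.upperCentralSeries_eq_top_iff_nilpotencyClass_le.mp htop
  omega
end

section
/- Let F be a field of positive characteristic p > 0 and d a natural number. Then every torsion-free nilpotent subgroup of GL_d(F) is abelian (in fact every torsion-free nilpotent group admitting an injective homomorphism into GL_d(F) is abelian). -/
open Subgroup in
lemma aux_central_commutator {G : Type*} [Group G] [Group.IsNilpotent G]
    (h : ¬ ∀ a b : G, a * b = b * a) :
    ∃ x y : G, x * y * x⁻¹ * y⁻¹ ∈ Subgroup.center G ∧ x * y * x⁻¹ * y⁻¹ ≠ 1 := by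
  have hZ2 : ¬ Subgroup.upperCentralSeries G 2 ≤ Subgroup.center G := by
    intro hle
    have hall : ∀ n, Subgroup.upperCentralSeries G n ≤ Subgroup.center G := by
      intro n
      induction n with
      | zero => exact bot_le
      | succ n ih =>
        intro g hg
        rw [Subgroup.mem_upperCentralSeries_succ_iff] at hg
        refine hle ?_
        rw [show (2 : ℕ) = 1 + 1 from rfl, Subgroup.mem_upperCentralSeries_succ_iff,
          Subgroup.upperCentralSeries_one]
        exact fun y => ih (hg y)
    obtain ⟨n, hn⟩ := Group.IsNilpotent.nilpotent (G := G)
    have : Subgroup.center G = ⊤ := top_le_iff.mp (hn ▸ hall n)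
    apply h
    intro a b
    exact Subgroup.mem_center_iff.mp (this ▸ Subgroup.mem_top b) a
  obtain ⟨x, hx2, hxc⟩ := SetLike.not_le_iff_exists.mp hZ2
  rw [Subgroup.mem_center_iff] at hxc
  push_neg at hxc
  obtain ⟨y, hy⟩ := hxc
  refine ⟨x, y, ?_, ?_⟩
  · have := (Subgroup.mem_upperCentralSeries_succ_iff (n := 1)).mp hx2 y
    rwa [Subgroup.upperCentralSeries_one] at this
  · intro heq
    apply hy
    have h1 : x * y * x⁻¹ = y := by
      have := mul_inv_eq_one.mp heq
      exact this
    have := mul_inv_eq_iff_eq_mul.mp h1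
    rw [this]


open Polynomial Module Module.End in
lemma aux_key {K : Type*} [Field K] [IsAlgClosed K] {p : ℕ} [Fact p.Prime] [CharP K p] {d : ℕ}
    (x y z : Matrix.GeneralLinearGroup (Fin d) K)
    (hzx : z * x = x * z) (hzy : z * y = y * z) (hxy : x * y = z * y * x) :
    ∃ m : ℕ, 0 < m ∧ z ^ m = 1 := by
  rcases Nat.eq_zero_or_pos d with rfl | hd
  · refine ⟨1, one_pos, ?_⟩
    rw [pow_one]
    exact Units.ext (Subsingleton.elim _ _)
  haveI : Nonempty (Fin d) := ⟨⟨0, hd⟩⟩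
  -- conjugation relation: x^n * y * (x^n)⁻¹ = z^n * y
  have hconj : ∀ n : ℕ, x ^ n * y = z ^ n * y * x ^ n := by
    intro n
    induction n with
    | zero => simp
    | succ n ih =>
      have hcz : Commute z x := hzx
      have hc : x ^ n * z = z * x ^ n := ((hcz.symm).pow_left n).eq
      calc x ^ (n + 1) * y = x ^ n * (x * y) := by rw [pow_succ']; group
        _ = x ^ n * z * y * x := by rw [hxy]; group
        _ = z * (x ^ n * y) * x := by rw [hc]; group
        _ = z * (z ^ n * y * x ^ n) * x := by rw [ih]
        _ = z ^ (n + 1) * y * x ^ (n + 1) := by rw [pow_succ, pow_succ']; group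
  -- pass to endomorphisms
  let e : Matrix (Fin d) (Fin d) K ≃ₐ[K] Module.End K (Fin d → K) := Matrix.toLinAlgEquiv'
  set Z : Module.End K (Fin d → K) := e (z : Matrix (Fin d) (Fin d) K) with hZ
  set Y : Module.End K (Fin d → K) := e (y : Matrix (Fin d) (Fin d) K) with hY
  have heig : ∀ lam ∈ spectrum K Z, ∃ m : ℕ, 0 < m ∧ lam ^ m = 1 := by
    intro lam hlam
    have hev : Z.HasEigenvalue lam := hasEigenvalue_iff_mem_spectrum.mpr hlam
    -- Y maps the eigenspace of Z into itself
    have hZY : Z * Y = Y * Z := by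
      rw [hZ, hY, ← map_mul, ← map_mul, ← Units.val_mul, ← Units.val_mul, hzy]
    have hmaps : ∀ v ∈ Z.eigenspace lam, Y v ∈ Z.eigenspace lam := by
      intro v hv
      rw [mem_eigenspace_iff] at hv ⊢
      calc Z (Y v) = (Z * Y) v := rfl
        _ = (Y * Z) v := by rw [hZY]
        _ = Y (Z v) := rfl
        _ = lam • Y v := by rw [hv, map_smul]
    haveI : Nontrivial (Z.eigenspace lam) :=
      Submodule.nontrivial_iff_ne_bot.mpr hev
    obtain ⟨μ, hμev⟩ := Module.End.exists_eigenvalue (LinearMap.restrict Y hmaps)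
    obtain ⟨w, hw⟩ := hμev.exists_hasEigenvector
    set v : Fin d → K := (w : Fin d → K) with hv
    have hvne : v ≠ 0 := fun hc => hw.2 (Subtype.ext hc)
    have hYv : Y v = μ • v := by
      have := hw.apply_eq_smul
      exact congrArg Subtype.val this
    have hZv : Z v = lam • v := mem_eigenspace_iff.mp w.2
    have hZpow : ∀ n : ℕ, (Z ^ n) v = lam ^ n • v := by
      intro n
      induction n with
      | zero => simp
      | succ n ih =>
        rw [pow_succ, pow_succ]
        calc (Z ^ n * Z) v = (Z ^ n) (Z v) := rfl
          _ = (Z ^ n) (lam • v) := by rw [hZv]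
          _ = lam • ((Z ^ n) v) := by rw [map_smul]
          _ = (lam ^ n * lam) • v := by rw [ih, smul_smul, mul_comm]
    -- transported eigenvalues
    have hkey : ∀ n : ℕ, Y.HasEigenvalue (μ * lam ^ n) := by
      intro n
      set u : Module.End K (Fin d → K) := e ((x ^ n : Matrix.GeneralLinearGroup (Fin d) K) :
        Matrix (Fin d) (Fin d) K) with hu
      set u' : Module.End K (Fin d → K) := e (((x ^ n)⁻¹ : Matrix.GeneralLinearGroup (Fin d) K) :
        Matrix (Fin d) (Fin d) K) with hu'
      have huu' : u' * u = 1 := by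
        rw [hu, hu', ← map_mul, ← Units.val_mul, inv_mul_cancel, Units.val_one, map_one]
      have hrel : u * Y = Z ^ n * Y * u := by
        have := hconj n
        have h2 : ((x ^ n : Matrix.GeneralLinearGroup (Fin d) K) : Matrix (Fin d) (Fin d) K) *
            (y : Matrix (Fin d) (Fin d) K) =
            ((z ^ n : Matrix.GeneralLinearGroup (Fin d) K) : Matrix (Fin d) (Fin d) K) *
            (y : Matrix (Fin d) (Fin d) K) *
            ((x ^ n : Matrix.GeneralLinearGroup (Fin d) K) : Matrix (Fin d) (Fin d) K) := by
          rw [← Units.val_mul, ← Units.val_mul, ← Units.val_mul, this]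
        have h3 := congrArg e h2
        rw [map_mul, map_mul, map_mul] at h3
        rw [hu, hY, hZ, h3, Units.val_pow_eq_pow_val, map_pow]
      have huu2 : u * u' = 1 := by
        rw [hu, hu', ← map_mul, ← Units.val_mul, mul_inv_cancel, Units.val_one, map_one]
      have hYu'v : Y (u' v) = (μ * lam ^ n) • (u' v) := by
        have h4 : Y * u' = u' * (Z ^ n * Y) := by
          calc Y * u' = u' * u * Y * u' := by rw [huu']; group
            _ = u' * (Z ^ n * Y * u) * u' := by rw [mul_assoc u' u Y, hrel]
            _ = u' * (Z ^ n * Y) * (u * u') := by group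
            _ = u' * (Z ^ n * Y) := by rw [huu2, mul_one]
        calc Y (u' v) = (Y * u') v := rfl
          _ = (u' * (Z ^ n * Y)) v := by rw [h4]
          _ = u' ((Z ^ n) (Y v)) := rfl
          _ = u' ((Z ^ n) (μ • v)) := by rw [hYv]
          _ = u' ((μ * lam ^ n) • v) := by
              rw [map_smul, hZpow n, smul_smul]
          _ = (μ * lam ^ n) • (u' v) := by rw [map_smul]
      have hu'vne : u' v ≠ 0 := by
        intro hc
        apply hvne
        calc v = (u * u') v := by rw [huu2]; rfl
          _ = u (u' v) := rfl
          _ = 0 := by rw [hc, map_zero]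
      exact hasEigenvalue_of_hasEigenvector ⟨mem_eigenspace_iff.mpr hYu'v, hu'vne⟩
    -- the values μ * lam ^ n all lie in the finite set of eigenvalues of Y
    obtain ⟨a, -, b, -, hab, habeq⟩ := Set.infinite_univ.exists_ne_map_eq_of_mapsTo
      (f := fun n : ℕ => μ * lam ^ n) (fun n _ => hkey n) Y.finite_hasEigenvalue
    have hμne : μ ≠ 0 := by
      intro hc
      apply hvne
      have hyinv : e ((y⁻¹ : Matrix.GeneralLinearGroup (Fin d) K) :
          Matrix (Fin d) (Fin d) K) * Y = 1 := by
        rw [hY, ← map_mul, ← Units.val_mul, inv_mul_cancel, Units.val_one, map_one]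
      calc v = (e ((y⁻¹ : Matrix.GeneralLinearGroup (Fin d) K) :
            Matrix (Fin d) (Fin d) K) * Y) v := by rw [hyinv]; rfl
        _ = e ((y⁻¹ : Matrix.GeneralLinearGroup (Fin d) K) :
            Matrix (Fin d) (Fin d) K) (Y v) := rfl
        _ = 0 := by rw [hYv, hc, zero_smul, map_zero]
    have hlamne : lam ≠ 0 := by
      intro hc
      apply hvne
      have hzinv : e ((z⁻¹ : Matrix.GeneralLinearGroup (Fin d) K) :
          Matrix (Fin d) (Fin d) K) * Z = 1 := by
        rw [hZ, ← map_mul, ← Units.val_mul, inv_mul_cancel, Units.val_one, map_one]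
      calc v = (e ((z⁻¹ : Matrix.GeneralLinearGroup (Fin d) K) :
            Matrix (Fin d) (Fin d) K) * Z) v := by rw [hzinv]; rfl
        _ = e ((z⁻¹ : Matrix.GeneralLinearGroup (Fin d) K) :
            Matrix (Fin d) (Fin d) K) (Z v) := rfl
        _ = 0 := by rw [hZv, hc, zero_smul, map_zero]
    have hpoweq : lam ^ a = lam ^ b := mul_left_cancel₀ hμne habeq
    have main : ∀ {a b : ℕ}, a < b → lam ^ a = lam ^ b → ∃ m : ℕ, 0 < m ∧ lam ^ m = 1 := by
      intro a b hlt hpow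
      refine ⟨b - a, Nat.sub_pos_of_lt hlt, ?_⟩
      refine mul_left_cancel₀ (pow_ne_zero a hlamne) ?_
      rw [← pow_add, Nat.add_sub_cancel' hlt.le, ← hpow, mul_one]
    rcases hab.lt_or_gt with hlt | hlt
    · exact main hlt hpoweq
    · exact main hlt hpoweq.symm
  -- construct N with lam ^ N = 1 for all lam in the spectrum of Z
  have hTfin : (spectrum K Z).Finite := Z.finite_spectrum
  have heig' : ∀ lam ∈ hTfin.toFinset, ∃ m : ℕ, 0 < m ∧ lam ^ m = 1 :=
    fun lam hl => heig lam (hTfin.mem_toFinset.mp hl)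
  choose! f hfpos hfone using heig'
  set N := ∏ lam ∈ hTfin.toFinset, f lam with hN
  have hNpos : 0 < N := Finset.prod_pos (fun lam hl => hfpos lam hl)
  have hNone : ∀ lam ∈ spectrum K Z, lam ^ N = 1 := by
    intro lam hl
    have hlT : lam ∈ hTfin.toFinset := hTfin.mem_toFinset.mpr hl
    obtain ⟨c, hc⟩ := Finset.dvd_prod_of_mem f hlT
    rw [hN, hc, pow_mul, hfone lam hlT, one_pow]
  -- all elements of the spectrum of Z ^ N equal 1
  have hspec : ∀ r ∈ spectrum K (Z ^ N), r = 1 := by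
    intro r hr
    rw [spectrum.map_pow_of_pos Z hNpos] at hr
    obtain ⟨lam, hl, rfl⟩ := hr
    exact hNone lam hl
  -- the minimal polynomial of Z ^ N is (X - 1) ^ k
  have hint : IsIntegral K (Z ^ N) := Algebra.IsIntegral.isIntegral _
  have hmono := minpoly.monic hint
  have hsplits : (minpoly K (Z ^ N)).Splits := IsAlgClosed.splits _
  have hroots : ∀ r ∈ (minpoly K (Z ^ N)).roots, r = 1 := by
    intro r hr
    have hIsRoot : (minpoly K (Z ^ N)).IsRoot r := (mem_roots'.mp hr).2
    have := Module.End.hasEigenvalue_of_isRoot hIsRoot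
    exact hspec r (Module.End.hasEigenvalue_iff_mem_spectrum.mp this)
  set k := (minpoly K (Z ^ N)).roots.card with hkdef
  have hpoly : minpoly K (Z ^ N) = (X - C 1) ^ k := by
    have hrep : (minpoly K (Z ^ N)).roots = Multiset.replicate k 1 :=
      Multiset.eq_replicate.mpr ⟨rfl, hroots⟩
    conv_lhs => rw [hsplits.eq_prod_roots_of_monic hmono]
    rw [hrep, Multiset.map_replicate, Multiset.prod_replicate]
  have hk0 : (Z ^ N - 1) ^ k = 0 := by
    have haev := minpoly.aeval K (Z ^ N)
    rw [hpoly] at haev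
    simpa [map_pow, map_sub, aeval_X, aeval_C, map_one] using haev
  -- back to matrices
  have hmat : ((z : Matrix (Fin d) (Fin d) K) ^ N - 1) ^ k = 0 := by
    have h7 := congrArg e.symm hk0
    rw [hZ] at h7
    simpa [map_pow, map_sub, map_one, map_zero, AlgEquiv.symm_apply_apply] using h7
  haveI : CharP (Matrix (Fin d) (Fin d) K) p := Matrix.charP p
  have hkle : k ≤ p ^ k := le_of_lt (Nat.lt_pow_self (Fact.out (p := p.Prime)).one_lt (n := k))
  have hmat2 : ((z : Matrix (Fin d) (Fin d) K) ^ N - 1) ^ (p ^ k) = 0 := by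
    calc ((z : Matrix (Fin d) (Fin d) K) ^ N - 1) ^ (p ^ k)
        = ((z : Matrix (Fin d) (Fin d) K) ^ N - 1) ^ k *
          ((z : Matrix (Fin d) (Fin d) K) ^ N - 1) ^ (p ^ k - k) := by
          rw [← pow_add, Nat.add_sub_cancel' hkle]
      _ = 0 := by rw [hmat, zero_mul]
  have hfinal : ((z : Matrix (Fin d) (Fin d) K)) ^ (N * p ^ k) = 1 := by
    have hcomm : Commute ((z : Matrix (Fin d) (Fin d) K) ^ N - 1)
        (1 : Matrix (Fin d) (Fin d) K) := Commute.one_right _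
    calc (z : Matrix (Fin d) (Fin d) K) ^ (N * p ^ k)
        = ((z : Matrix (Fin d) (Fin d) K) ^ N) ^ (p ^ k) := by rw [pow_mul]
      _ = (((z : Matrix (Fin d) (Fin d) K) ^ N - 1) + 1) ^ (p ^ k) := by
          congr 1
          abel
      _ = ((z : Matrix (Fin d) (Fin d) K) ^ N - 1) ^ (p ^ k) +
          (1 : Matrix (Fin d) (Fin d) K) ^ (p ^ k) := add_pow_char_pow_of_commute _ _ hcomm
      _ = 1 := by rw [hmat2, one_pow, zero_add]
  refine ⟨N * p ^ k, Nat.mul_pos hNpos (pow_pos (Fact.out (p := p.Prime)).pos k), ?_⟩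
  apply Units.ext
  rw [Units.val_pow_eq_pow_val, hfinal, Units.val_one]

lemma aux_part2 (F : Type*) [Field F] (p : ℕ) (hp : 0 < p) [CharP F p] (d : ℕ)
    (G : Type*) [Group G] (htf : Monoid.IsTorsionFree G) (hnil : Group.IsNilpotent G)
    (hinj : ∃ φ : G →* Matrix.GeneralLinearGroup (Fin d) F, Function.Injective φ) :
    ∀ a b : G, a * b = b * a := by
  obtain ⟨φ, hφ⟩ := hinj
  by_contra hcon
  haveI : NeZero p := ⟨hp.ne'⟩
  haveI hfact : Fact p.Prime := CharP.char_is_prime_of_pos F p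
  obtain ⟨x, y, hzc, hzne⟩ := aux_central_commutator (fun h => hcon (fun a b => h a b))
  -- the base-change ring hom on matrices
  set m : Matrix (Fin d) (Fin d) F →+* Matrix (Fin d) (Fin d) (AlgebraicClosure F) :=
    (algebraMap F (AlgebraicClosure F)).mapMatrix with hm
  have hminj : Function.Injective m := by
    intro A B hAB
    ext i j
    exact (algebraMap F (AlgebraicClosure F)).injective
      (congrFun (congrFun (congrArg Matrix.of.symm hAB) i) j)
  set ψ : Matrix.GeneralLinearGroup (Fin d) F →*
      Matrix.GeneralLinearGroup (Fin d) (AlgebraicClosure F) :=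
    Units.map m.toMonoidHom with hψ
  have hψinj : Function.Injective ψ := by
    intro u v huv
    exact Units.ext (hminj (congrArg Units.val huv))
  set Φ : G →* Matrix.GeneralLinearGroup (Fin d) (AlgebraicClosure F) := ψ.comp φ with hΦ
  have hΦinj : Function.Injective Φ := hψinj.comp hφ
  set c : G := x * y * x⁻¹ * y⁻¹ with hc
  have hcommx : c * x = x * c := (Subgroup.mem_center_iff.mp hzc x).symm
  have hcommy : c * y = y * c := (Subgroup.mem_center_iff.mp hzc y).symm
  have hxyrel : x * y = c * y * x := by rw [hc]; group
  obtain ⟨n, hn, hZn⟩ := aux_key (p := p) (Φ x) (Φ y) (Φ c)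
    (by rw [← map_mul, ← map_mul, hcommx])
    (by rw [← map_mul, ← map_mul, hcommy])
    (by rw [← map_mul, ← map_mul, ← map_mul, hxyrel])
  have hcn : c ^ n = 1 := by
    apply hΦinj
    rw [map_pow, map_one, hZn]
  exact htf c hzne (isOfFinOrder_iff_pow_eq_one.mpr ⟨n, hn, hcn⟩)

theorem statement14 (F : Type*) [Field F] (p : ℕ) (hp : 0 < p) [CharP F p] (d : ℕ) :
    (∀ H : Subgroup (Matrix.GeneralLinearGroup (Fin d) F),
      Monoid.IsTorsionFree H → Group.IsNilpotent H → ∀ a b : H, a * b = b * a) ∧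
    (∀ (G : Type*) [Group G], Monoid.IsTorsionFree G → Group.IsNilpotent G →
      (∃ φ : G →* Matrix.GeneralLinearGroup (Fin d) F, Function.Injective φ) →
      ∀ a b : G, a * b = b * a) := by
  constructor
  · intro H htf hnil
    exact aux_part2 F p hp d H htf hnil ⟨H.subtype, Subgroup.subtype_injective H⟩
  · intro G _ htf hnil hex
    exact aux_part2 F p hp d G htf hnil hex
end

section
/- Let F be a field, p a prime number with p different from the characteristic of F, and n a natural number. Let A and S be elements of GL_n(F), and set B = S·A·S⁻¹·A⁻¹. Assume that B commutes with both A and S, that A^p = 1, that B^p = 1, and that B ≠ 1. Then p ≤ n. -/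
open Polynomial Module

set_option maxHeartbeats 1000000 in
theorem statement18 (F : Type*) [Field F] (p : ℕ) (hp : p.Prime)
    (hchar : ringChar F ≠ p) (n : ℕ)
    (A S B : Matrix.GeneralLinearGroup (Fin n) F)
    (hB : B = S * A * S⁻¹ * A⁻¹)
    (hBA : B * A = A * B) (hBS : B * S = S * B)
    (hAp : A ^ p = 1) (hBp : B ^ p = 1) (hB1 : B ≠ 1) :
    p ≤ n := by
  classical
  rcases Nat.eq_zero_or_pos n with hn | hn
  · subst hn
    refine absurd (Units.ext ?_) hB1
    ext i j
    exact i.elim0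
  -- Group identities
  have hSA : S * A = B * (A * S) := by subst hB; group
  have hBS' : B * S⁻¹ = S⁻¹ * B := by
    have := congrArg (fun x => S⁻¹ * x * S⁻¹) hBS
    simpa [mul_assoc] using this.symm
  have hBA' : B * A⁻¹ = A⁻¹ * B := by
    have := congrArg (fun x => A⁻¹ * x * A⁻¹) hBA
    simpa [mul_assoc] using this.symm
  -- Pass to the algebraic closure
  set K := AlgebraicClosure F with hK
  let φ : F →+* K := algebraMap F K
  let ψ : Matrix (Fin n) (Fin n) F →+* Module.End K (Fin n → K) :=
    (Matrix.toLinAlgEquiv' : Matrix (Fin n) (Fin n) K ≃ₐ[K]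
      Module.End K (Fin n → K)).toRingEquiv.toRingHom.comp φ.mapMatrix
  have hψinj : Function.Injective ψ := by
    refine Matrix.toLinAlgEquiv'.injective.comp (fun X Y h => ?_)
    ext i j
    refine φ.injective ?_
    have : (X.map φ) i j = (Y.map φ) i j := by
      simp only [RingHom.mapMatrix_apply] at h; rw [h]
    simpa [Matrix.map_apply] using this
  set a := ψ ↑A with ha
  set s := ψ ↑S with hs
  set b := ψ ↑B with hbdef
  set a' := ψ ↑(A⁻¹) with ha'
  set s' := ψ ↑(S⁻¹) with hs'
  have push : ∀ X Y : Matrix.GeneralLinearGroup (Fin n) F,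
      ψ ↑(X * Y) = ψ ↑X * ψ ↑Y := fun X Y => by rw [Units.val_mul, map_mul]
  have hba : b * a = a * b := by rw [ha, hbdef, ← push, ← push, hBA]
  have hbs : b * s = s * b := by rw [hs, hbdef, ← push, ← push, hBS]
  have hba' : b * a' = a' * b := by rw [ha', hbdef, ← push, ← push, hBA']
  have hbs' : b * s' = s' * b := by rw [hs', hbdef, ← push, ← push, hBS']
  have hsa : s * a = b * (a * s) := by
    rw [ha, hs, hbdef, ← push, ← push, ← push, hSA]
  have haa' : a * a' = 1 := by
    rw [ha, ha', ← push, mul_inv_cancel, Units.val_one, map_one]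
  have hss' : s * s' = 1 := by
    rw [hs, hs', ← push, mul_inv_cancel, Units.val_one, map_one]
  have hbp' : b ^ p = 1 := by
    rw [hbdef, ← map_pow, ← Units.val_pow_eq_pow_val, hBp, Units.val_one, map_one]
  have hb1 : b ≠ 1 := by
    intro h
    apply hB1
    apply Units.ext
    apply hψinj
    rw [← hbdef, h, Units.val_one, map_one]
  -- nontriviality
  haveI : Nonempty (Fin n) := ⟨⟨0, hn⟩⟩
  haveI : Nontrivial (Module.End K (Fin n → K)) := by
    refine ⟨0, 1, fun h => ?_⟩
    have := LinearMap.congr_fun h (fun _ => (1 : K))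
    simpa using congrFun this ⟨0, hn⟩
  -- characteristic
  have hpK : (p : K) ≠ 0 := by
    have hpF : (p : F) ≠ 0 := by
      intro h
      rcases hp.eq_one_or_self_of_dvd _ (ringChar.dvd h) with h1 | h1
      · exact CharP.ringChar_ne_one h1
      · exact hchar h1
    intro h
    apply hpF
    apply φ.injective
    rw [map_natCast, map_zero, h]
  -- the minimal polynomial of b
  have hint : IsIntegral K b := Algebra.IsIntegral.isIntegral b
  have hdvd : minpoly K b ∣ (X : K[X]) ^ p - 1 :=
    minpoly.dvd _ _ (by simp [hbp'])
  have hsep : ((X : K[X]) ^ p - 1).Separable :=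
    Polynomial.X_pow_sub_one_separable_iff.mpr hpK
  have hmsep : (minpoly K b).Separable := hsep.of_dvd hdvd
  have hmono : (minpoly K b).Monic := minpoly.monic hint
  have hsplits : (minpoly K b).Splits := IsAlgClosed.splits _
  have hcard : (minpoly K b).roots.card = (minpoly K b).natDegree :=
    (Polynomial.splits_iff_card_roots).mp hsplits
  have hpos : 0 < (minpoly K b).natDegree := minpoly.natDegree_pos hint
  -- find an eigenvalue ζ ≠ 1
  obtain ⟨ζ, hζroot, hζ1⟩ : ∃ ζ ∈ (minpoly K b).roots, ζ ≠ 1 := by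
    by_contra hcon
    push_neg at hcon
    have hm : minpoly K b = ((X : K[X]) - C 1) ^ (minpoly K b).roots.card := by
      have h1 := (Polynomial.prod_multiset_X_sub_C_of_monic_of_roots_card_eq hmono hcard).symm
      have h2 : Multiset.map (fun a => (X : K[X]) - C a) (minpoly K b).roots
          = Multiset.map (fun _ => (X : K[X]) - C 1) (minpoly K b).roots :=
        Multiset.map_congr rfl fun ζ hζ => by rw [hcon ζ hζ]
      conv_lhs => rw [h1, h2, Multiset.map_const', Multiset.prod_replicate]
    have hsq : Squarefree (minpoly K b) := hmsep.squarefree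
    have hcard1 : (minpoly K b).roots.card ≤ 1 := by
      by_contra hc
      push_neg at hc
      have hdvd2 : ((X : K[X]) - C 1) * ((X : K[X]) - C 1) ∣ minpoly K b := by
        rw [hm, ← sq]
        exact pow_dvd_pow _ hc
      exact Polynomial.not_isUnit_X_sub_C 1 (hsq _ hdvd2)
    have hcardeq : (minpoly K b).roots.card = 1 := le_antisymm hcard1 (hcard ▸ hpos)
    have hm1 : minpoly K b = (X : K[X]) - C 1 := by rw [hm, hcardeq, pow_one]
    have := minpoly.aeval K b
    rw [hm1] at this
    simp only [map_sub, aeval_X, aeval_C] at this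
    apply hb1
    have : b = algebraMap K (Module.End K (Fin n → K)) 1 := by
      rwa [sub_eq_zero] at this
    rw [this, map_one]
  have hζrootm : (minpoly K b).IsRoot ζ := Polynomial.isRoot_of_mem_roots hζroot
  have hζeig : b.HasEigenvalue ζ := Module.End.hasEigenvalue_of_isRoot hζrootm
  have hζp : ζ ^ p = 1 := by
    have := Polynomial.eval_eq_zero_of_dvd_of_eval_eq_zero hdvd hζrootm
    simpa [sub_eq_zero] using this
  -- the eigenspace
  set W := Module.End.eigenspace b ζ with hW
  have hmem : ∀ v, v ∈ W ↔ b v = ζ • v := fun v => Module.End.mem_eigenspace_iff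
  have hmaps : ∀ (f : Module.End K (Fin n → K)), b * f = f * b → ∀ x ∈ W, f x ∈ W := by
    intro f hf x hx
    rw [hmem] at hx ⊢
    have h1 : b (f x) = f (b x) := by
      rw [← Module.End.mul_apply, ← Module.End.mul_apply, hf]
    rw [h1, hx, map_smul]
  have hmA := hmaps a hba
  have hmS := hmaps s hbs
  have hmA' := hmaps a' hba'
  have hmS' := hmaps s' hbs'
  set A₀ := a.restrict hmA with hA₀
  set S₀ := s.restrict hmS with hS₀
  set A₁ := a'.restrict hmA' with hA₁
  set S₁ := s'.restrict hmS' with hS₁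
  have hcompA : A₀ ∘ₗ A₁ = LinearMap.id := by
    refine LinearMap.ext fun v => Subtype.ext ?_
    simp only [LinearMap.comp_apply, hA₀, hA₁, LinearMap.restrict_apply, LinearMap.id_apply]
    rw [← Module.End.mul_apply, haa']
    rfl
  have hcompS : S₀ ∘ₗ S₁ = LinearMap.id := by
    refine LinearMap.ext fun v => Subtype.ext ?_
    simp only [LinearMap.comp_apply, hS₀, hS₁, LinearMap.restrict_apply, LinearMap.id_apply]
    rw [← Module.End.mul_apply, hss']
    rfl
  have hdetA : A₀.det ≠ 0 := by
    have : A₀.det * A₁.det = 1 := by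
      rw [← LinearMap.det_comp, hcompA, LinearMap.det_id]
    exact left_ne_zero_of_mul_eq_one this
  have hdetS : S₀.det ≠ 0 := by
    have : S₀.det * S₁.det = 1 := by
      rw [← LinearMap.det_comp, hcompS, LinearMap.det_id]
    exact left_ne_zero_of_mul_eq_one this
  -- key relation on W : S₀ A₀ = ζ • A₀ S₀
  have hkey : S₀ ∘ₗ A₀ = ζ • (A₀ ∘ₗ S₀) := by
    refine LinearMap.ext fun v => Subtype.ext ?_
    have h1 : a (s ↑v) ∈ W := hmA _ (hmS _ v.2)
    have h2 : s (a ↑v) = b (a (s ↑v)) := by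
      rw [← Module.End.mul_apply, ← Module.End.mul_apply, ← Module.End.mul_apply, hsa,
        mul_assoc]
    simp only [LinearMap.comp_apply, LinearMap.smul_apply, hA₀, hS₀,
      LinearMap.restrict_apply, SetLike.val_smul]
    rw [h2, (hmem _).mp h1]
  -- take determinants
  have hdet := congrArg LinearMap.det hkey
  rw [LinearMap.det_comp, LinearMap.det_smul, LinearMap.det_comp] at hdet
  have hζd : ζ ^ (finrank K W) = 1 := by
    have hne : A₀.det * S₀.det ≠ 0 := mul_ne_zero hdetA hdetS
    have h2 : (1 : K) * (A₀.det * S₀.det) = ζ ^ (finrank K W) * (A₀.det * S₀.det) := by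
      rw [one_mul, ← hdet]; ring
    exact (mul_right_cancel₀ hne h2).symm
  -- conclude
  have horder : orderOf ζ = p := by
    have hd := orderOf_dvd_of_pow_eq_one hζp
    cases hp.eq_one_or_self_of_dvd _ hd with
    | inl h => exact absurd (orderOf_eq_one_iff.mp h) hζ1
    | inr h => exact h
  have hpd : p ∣ finrank K W := by
    rw [← horder]
    exact orderOf_dvd_of_pow_eq_one hζd
  have hWne : W ≠ ⊥ := hζeig
  have hWpos : 0 < finrank K W := by
    haveI : Nontrivial W := Submodule.nontrivial_iff_ne_bot.mpr hWne
    exact finrank_pos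
  have hfin : finrank K W ≤ n := by
    have h1 : finrank K W ≤ finrank K (Fin n → K) := Submodule.finrank_le W
    rwa [Module.finrank_fin_fun] at h1
  exact le_trans (Nat.le_of_dvd hWpos hpd) hfin
end

section
/- Let E be the group of elementary polynomial automorphisms of ℂ², i.e. the subgroup of ℂ-algebra automorphisms g of ℂ[x,y] = MvPolynomial (Fin 2) ℂ for which there exist α, β ∈ ℂ*, c ∈ ℂ, and a polynomial P ∈ ℂ[T] such that g(x) = α·x + P(y) and g(y) = β·y + c. Then every finitely generated subgroup Γ of E is linear over ℂ: there exist a natural number d and an injective group homomorphism from Γ into GL_d(ℂ). -/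
open MvPolynomial

private lemma aux_aeval_mem_span {N : ℕ} (q : Polynomial ℂ) (hq : q.natDegree ≤ N) :
    Polynomial.aeval (X 1 : MvPolynomial (Fin 2) ℂ) q ∈
      Submodule.span ℂ (insert (X 0 : MvPolynomial (Fin 2) ℂ)
        ((fun k : ℕ => (X 1 : MvPolynomial (Fin 2) ℂ) ^ k) '' Set.Iic N)) := by
  rw [Polynomial.aeval_eq_sum_range]
  refine Submodule.sum_mem _ fun i hi => Submodule.smul_mem _ _ ?_
  refine Submodule.subset_span (Set.mem_insert_iff.mpr (Or.inr ⟨i, ?_, rfl⟩))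
  exact le_trans (Nat.lt_succ_iff.mp (Finset.mem_range.mp hi)) hq

theorem statement19
    (Γ : Subgroup (MvPolynomial (Fin 2) ℂ ≃ₐ[ℂ] MvPolynomial (Fin 2) ℂ))
    (hΓ : ∀ g ∈ Γ, ∃ (α β c : ℂ) (P : Polynomial ℂ), α ≠ 0 ∧ β ≠ 0 ∧
      g (X 0) = C α * X 0 + Polynomial.aeval (X 1 : MvPolynomial (Fin 2) ℂ) P ∧
      g (X 1) = C β * X 1 + C c)
    (hfg : Group.FG Γ) :
    ∃ (d : ℕ) (φ : Γ →* Matrix.GeneralLinearGroup (Fin d) ℂ), Function.Injective φ := by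
  classical
  set A := MvPolynomial (Fin 2) ℂ ≃ₐ[ℂ] MvPolynomial (Fin 2) ℂ
  obtain ⟨S, hSΓ, hSfin⟩ := Subgroup.fg_iff _ |>.mp ((Group.fg_iff_subgroup_fg Γ).mp hfg)
  set T : Set A := S ∪ S⁻¹ with hT
  have hTfin : T.Finite := hSfin.union hSfin.inv
  have hST : S ⊆ T := Set.subset_union_left
  have hSsubΓ : S ⊆ Γ := hSΓ ▸ Subgroup.subset_closure
  have hTΓ : ∀ g ∈ T, g ∈ Γ := by
    intro g hg
    rcases hg with hg | hg
    · exact hSsubΓ hg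
    · have : g⁻¹ ∈ Γ := hSsubΓ (Set.mem_inv.mp hg)
      simpa using Γ.inv_mem this
  have hTinv : ∀ g ∈ T, g⁻¹ ∈ T := by
    intro g hg
    rcases hg with hg | hg
    · exact Or.inr (Set.inv_mem_inv.mpr hg)
    · exact Or.inl (Set.mem_inv.mp hg)
  -- choose data for elements of T
  have hTdata : ∀ g ∈ T, ∃ n : ℕ, ∃ (α β c : ℂ) (P : Polynomial ℂ), α ≠ 0 ∧ β ≠ 0 ∧
      P.natDegree ≤ n ∧
      g (X 0) = C α * X 0 + Polynomial.aeval (X 1 : MvPolynomial (Fin 2) ℂ) P ∧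
      g (X 1) = C β * X 1 + C c := by
    intro g hg
    obtain ⟨α, β, c, P, h1, h2, h3, h4⟩ := hΓ g (hTΓ g hg)
    exact ⟨P.natDegree, α, β, c, P, h1, h2, le_refl _, h3, h4⟩
  choose n hn using hTdata
  set m : A → ℕ := fun g => if hg : g ∈ T then n g hg else 0 with hm
  set N : ℕ := 1 + hTfin.toFinset.sup m with hN
  have hN1 : 1 ≤ N := Nat.le_add_right 1 _
  have hTbound : ∀ g (hg : g ∈ T), n g hg ≤ N := by
    intro g hg
    have h1 : n g hg = m g := by simp [hm, hg]
    have h2 : m g ≤ hTfin.toFinset.sup m :=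
      Finset.le_sup (hTfin.mem_toFinset.mpr hg)
    omega
  set V : Submodule ℂ (MvPolynomial (Fin 2) ℂ) :=
    Submodule.span ℂ (insert (X 0 : MvPolynomial (Fin 2) ℂ)
      ((fun k : ℕ => (X 1 : MvPolynomial (Fin 2) ℂ) ^ k) '' Set.Iic N)) with hV
  have hX0 : (X 0 : MvPolynomial (Fin 2) ℂ) ∈ V :=
    Submodule.subset_span (Set.mem_insert _ _)
  have hXpow : ∀ k ≤ N, (X 1 : MvPolynomial (Fin 2) ℂ) ^ k ∈ V := fun k hk =>
    Submodule.subset_span (Set.mem_insert_iff.mpr (Or.inr ⟨k, hk, rfl⟩))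
  have hX1 : (X 1 : MvPolynomial (Fin 2) ℂ) ∈ V := by
    simpa using hXpow 1 hN1
  -- key preservation
  have key : ∀ (g : A) (α β c : ℂ) (P : Polynomial ℂ), P.natDegree ≤ N →
      g (X 0) = C α * X 0 + Polynomial.aeval (X 1 : MvPolynomial (Fin 2) ℂ) P →
      g (X 1) = C β * X 1 + C c → ∀ v ∈ V, g v ∈ V := by
    intro g α β c P hP h0 h1 v hv
    induction hv using Submodule.span_induction with
    | mem x hx =>
      rcases Set.mem_insert_iff.mp hx with rfl | ⟨k, hk, rfl⟩
      · rw [h0]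
        refine Submodule.add_mem _ ?_ (aux_aeval_mem_span P hP)
        rw [← MvPolynomial.smul_eq_C_mul]
        exact Submodule.smul_mem _ _ hX0
      · simp only [map_pow, h1]
        have heq : (C β * X 1 + C c : MvPolynomial (Fin 2) ℂ) =
            Polynomial.aeval (X 1 : MvPolynomial (Fin 2) ℂ)
              (Polynomial.C β * Polynomial.X + Polynomial.C c) := by simp
        rw [heq, ← map_pow]
        refine aux_aeval_mem_span _ ?_
        calc ((Polynomial.C β * Polynomial.X + Polynomial.C c) ^ k).natDegree
            ≤ k * (Polynomial.C β * Polynomial.X + Polynomial.C c).natDegree :=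
              Polynomial.natDegree_pow_le
          _ ≤ k * 1 := Nat.mul_le_mul_left k Polynomial.natDegree_linear_le
          _ ≤ N := by rw [mul_one]; exact hk
    | zero => simp
    | add x y _ _ hx hy => rw [map_add]; exact Submodule.add_mem _ hx hy
    | smul a x _ hx => rw [map_smul]; exact Submodule.smul_mem _ _ hx
  -- the subgroup preserving V in both directions
  set H : Subgroup A :=
    { carrier := {g : A | ∀ v ∈ V, g v ∈ V ∧ g.symm v ∈ V}
      one_mem' := fun v hv => ⟨hv, hv⟩
      mul_mem' := fun {a b} ha hb v hv =>
        ⟨(ha _ (hb v hv).1).1, (hb _ (ha v hv).2).2⟩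
      inv_mem' := fun {a} ha v hv => ⟨(ha v hv).2, (ha v hv).1⟩ } with hHdef
  have hTH : ∀ g ∈ T, g ∈ H := by
    intro g hg
    obtain ⟨α, β, c, P, _, _, hPdeg, h0, h1⟩ := hn g hg
    obtain ⟨α', β', c', P', _, _, hPdeg', h0', h1'⟩ := hn g⁻¹ (hTinv g hg)
    intro v hv
    refine ⟨key g α β c P (le_trans hPdeg (hTbound g hg)) h0 h1 v hv, ?_⟩
    exact key g⁻¹ α' β' c' P' (le_trans hPdeg' (hTbound _ (hTinv g hg))) h0' h1' v hv
  have hΓH : ∀ g ∈ Γ, g ∈ H := by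
    intro g hg
    have : Γ ≤ H := by
      rw [← hSΓ]
      exact (Subgroup.closure_le H).mpr (fun x hx => hTH x (hST hx))
    exact this hg
  -- V is finite dimensional
  haveI : FiniteDimensional ℂ V := FiniteDimensional.span_of_finite ℂ
    (((Set.finite_Iic N).image _).insert _)
  set d := Module.finrank ℂ V with hd
  set b : Module.Basis (Fin d) ℂ V := Module.finBasis ℂ V with hb
  -- the representation
  have hmap : ∀ g : Γ, V.map ((g : A).toLinearEquiv :
      MvPolynomial (Fin 2) ℂ →ₗ[ℂ] MvPolynomial (Fin 2) ℂ) = V := by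
    intro g
    refine le_antisymm (Submodule.map_le_iff_le_comap.mpr fun v hv =>
      (hΓH g g.2 v hv).1) fun v hv => ?_
    exact Submodule.mem_map.mpr ⟨(g : A).symm v, (hΓH g g.2 v hv).2, by simp⟩
  set e : Γ → (V ≃ₗ[ℂ] V) := fun g =>
    LinearEquiv.ofSubmodules (g : A).toLinearEquiv V V (hmap g) with he
  have he_apply : ∀ (g : Γ) (v : V), ((e g v : MvPolynomial (Fin 2) ℂ)) = (g : A) v :=
    fun g v => rfl
  have he_mul : ∀ g h : Γ, e (g * h) = (e h).trans (e g) := by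
    intro g h
    refine LinearEquiv.ext fun v => Subtype.ext ?_
    simp only [he_apply, LinearEquiv.trans_apply, Subgroup.coe_mul, AlgEquiv.mul_apply]
  set ρ : Γ →* (V ≃ₗ[ℂ] V) := MonoidHom.mk' e (by
    intro g h
    rw [he_mul]
    rfl) with hρ
  have hρinj : Function.Injective ρ := by
    refine (injective_iff_map_eq_one ρ).mpr fun g hg => ?_
    have h0 : (g : A) (X 0) = X 0 := by
      have := congrArg (fun f => ((f ⟨X 0, hX0⟩ : V) : MvPolynomial (Fin 2) ℂ)) hg
      exact this
    have h1 : (g : A) (X 1) = X 1 := by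
      have := congrArg (fun f => ((f ⟨X 1, hX1⟩ : V) : MvPolynomial (Fin 2) ℂ)) hg
      exact this
    have hAH : ((g : A) : MvPolynomial (Fin 2) ℂ →ₐ[ℂ] MvPolynomial (Fin 2) ℂ) =
        AlgHom.id ℂ _ := by
      apply MvPolynomial.algHom_ext
      intro i
      fin_cases i
      · simpa using h0
      · simpa using h1
    apply Subtype.ext
    exact AlgEquiv.ext fun x => DFunLike.congr_fun hAH x
  -- to matrices
  refine ⟨d, ((Units.mapEquiv (LinearMap.toMatrixAlgEquiv b).toMulEquiv).toMonoidHom.comp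
    (LinearMap.GeneralLinearGroup.generalLinearEquiv ℂ V).symm.toMonoidHom).comp ρ, ?_⟩
  exact ((Units.mapEquiv (LinearMap.toMatrixAlgEquiv b).toMulEquiv).injective.comp
    (LinearMap.GeneralLinearGroup.generalLinearEquiv ℂ V).symm.injective).comp hρinj
end
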